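/- Under condition (G1), the map F : ℝ^d → ℝ^d defined by F(y) = K1(|y|)·y is monotone; equivalently, Φ(y,y') ≥ 0 for all y, y' ∈ ℝ^d. -/

import Mathlib

/-- Under condition (G1), the map `F(y) = K1(|y|)·y` is monotone on `ℝ^d`;
equivalently `Φ(y,y') = (K1(|y'|)y' − K1(|y|)y)·(y'−y) ≥ 0`
(Proposition III.4 of Aulisa et al.). -/
theorem forchheimer_map_monotone
    (d : ℕ) (hd : 1 ≤ d)
    (g g' sol K1 : ℝ → ℝ)
    -- condition (G1)
    (hg_cont : ContinuousOn g (Set.Ici 0))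
    (hg_deriv : ∀ s, 0 < s → HasDerivAt g (g' s) s)
    (hg'_cont : ContinuousOn g' (Set.Ioi 0))
    (hg'_nonneg : ∀ s, 0 < s → 0 ≤ g' s)
    (hg0 : 0 < g 0)
    -- the implicit function s(ξ): the unique nonnegative solution of s·g(s) = ξ
    (hsol : ∀ ξ, 0 ≤ ξ → (0 ≤ sol ξ ∧ sol ξ * g (sol ξ) = ξ))
    -- the Forchheimer coefficient
    (hK1 : ∀ ξ, 0 ≤ ξ → K1 ξ = 1 / g (sol ξ)) :
    ∀ y y' : EuclideanSpace ℝ (Fin d),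
      0 ≤ (inner ℝ (K1 ‖y'‖ • y' - K1 ‖y‖ • y) (y' - y) : ℝ) := by
  -- g is monotone on [0,∞)
  have hmono : MonotoneOn g (Set.Ici (0:ℝ)) := by
    apply monotoneOn_of_deriv_nonneg (convex_Ici 0) hg_cont
    · intro x hx
      rw [interior_Ici] at hx
      exact (hg_deriv x hx).differentiableAt.differentiableWithinAt
    · intro x hx
      rw [interior_Ici] at hx
      rw [(hg_deriv x hx).deriv]
      exact hg'_nonneg x hx
  -- g is positive on [0,∞)
  have hgpos : ∀ s : ℝ, 0 ≤ s → 0 < g s := fun s hs =>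
    lt_of_lt_of_le hg0 (hmono Set.self_mem_Ici hs hs)
  -- sol is monotone
  have hsolmono : ∀ ξ η : ℝ, 0 ≤ ξ → ξ ≤ η → sol ξ ≤ sol η := by
    intro ξ η hξ hξη
    by_contra h
    push_neg at h
    obtain ⟨hsη, heη⟩ := hsol η (le_trans hξ hξη)
    obtain ⟨hsξ, heξ⟩ := hsol ξ hξ
    have h1 : g (sol η) ≤ g (sol ξ) := hmono hsη (le_trans hsη h.le) h.le
    have h2 : sol η * g (sol η) ≤ sol η * g (sol ξ) :=
      mul_le_mul_of_nonneg_left h1 hsη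
    have h3 : sol η * g (sol ξ) < sol ξ * g (sol ξ) :=
      mul_lt_mul_of_pos_right h (hgpos _ hsξ)
    have : η < ξ := by rw [← heη, ← heξ]; exact lt_of_le_of_lt h2 h3
    linarith
  -- K1 ξ * ξ = sol ξ
  have hKs : ∀ ξ : ℝ, 0 ≤ ξ → K1 ξ * ξ = sol ξ := by
    intro ξ hξ
    obtain ⟨hs, he⟩ := hsol ξ hξ
    rw [hK1 ξ hξ]
    field_simp [(hgpos _ hs).ne']
    linarith [he]
  have hKnn : ∀ ξ : ℝ, 0 ≤ ξ → 0 ≤ K1 ξ := by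
    intro ξ hξ
    obtain ⟨hs, _⟩ := hsol ξ hξ
    rw [hK1 ξ hξ]
    exact (one_div_pos.mpr (hgpos _ hs)).le
  intro y y'
  set a := ‖y‖ with haa
  set b := ‖y'‖ with hbb
  have ha : (0:ℝ) ≤ a := norm_nonneg _
  have hb : (0:ℝ) ≤ b := norm_nonneg _
  set α := K1 b with hα
  set β := K1 a with hβ
  have hαnn : 0 ≤ α := hKnn b hb
  have hβnn : 0 ≤ β := hKnn a ha
  have hαb : α * b = sol b := hKs b hb
  have hβa : β * a = sol a := hKs a ha
  have hkey : 0 ≤ (b - a) * (α * b - β * a) := by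
    rw [hαb, hβa]
    rcases le_total a b with h | h
    · exact mul_nonneg (by linarith) (by have := hsolmono a b ha h; linarith)
    · have := hsolmono b a hb h
      have : (b - a) * (sol b - sol a) = (a - b) * (sol a - sol b) := by ring
      rw [this]
      exact mul_nonneg (by linarith) (by have := hsolmono b a hb h; linarith)
  have ht : (inner ℝ y y' : ℝ) ≤ a * b := by
    calc (inner ℝ y y' : ℝ) ≤ ‖y‖ * ‖y'‖ := real_inner_le_norm y y'
    _ = a * b := rfl
  have hexp : (inner ℝ (α • y' - β • y) (y' - y) : ℝ)
      = α * b ^ 2 - (α + β) * (inner ℝ y y' : ℝ) + β * a ^ 2 := by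
    simp only [inner_sub_left, inner_sub_right, real_inner_smul_left,
      real_inner_self_eq_norm_sq, real_inner_comm y' y]
    ring
  rw [hexp]
  nlinarith [mul_le_mul_of_nonneg_left ht hαnn, mul_le_mul_of_nonneg_left ht hβnn, hkey]
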